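/- arXiv:2010.14658 — 2 statements merged into one kernel-verified Lean document; each statement's English description precedes it below -/
import Mathlib

section
/- Let R(x) = e^{−f(x)} be a probability density on ℝ^d with f 1-strongly convex, L-smooth, and global minimum at 0, and let Q₀ = N(0, I_d). Then for all α ≥ 1, D_α(R ‖ Q₀) ≤ d ln L. -/
open MeasureTheory Real

/-- The α-Rényi divergence between two probability densities on `ℝ^d`. -/
noncomputable def renyiDiv {d : ℕ} (α : ℝ) (μ ν : EuclideanSpace ℝ (Fin d) → ℝ) : ℝ :=
  (α - 1)⁻¹ * Real.log (∫ x, μ x ^ α * ν x ^ (1 - α))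

/-- Density of the isotropic Gaussian `N(m, σ²I_d)` on `ℝ^d`. -/
noncomputable def gaussDensity {d : ℕ} (σ2 : ℝ) (m : EuclideanSpace ℝ (Fin d)) :
    EuclideanSpace ℝ (Fin d) → ℝ :=
  fun x => (2 * π * σ2) ^ (-(d : ℝ) / 2) * Real.exp (-‖x - m‖ ^ 2 / (2 * σ2))

lemma integrable_gauss_aux {d : ℕ} {b : ℝ} (hb : 0 < b) :
    Integrable (fun x : EuclideanSpace ℝ (Fin d) => rexp (-b * ‖x‖ ^ 2)) := by
  have h := (GaussianFourier.integrable_cexp_neg_mul_sq_norm_add (V := EuclideanSpace ℝ (Fin d))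
    (b := (b : ℂ)) (by simpa using hb) 0 0).re
  refine h.congr (Filter.Eventually.of_forall fun v => ?_)
  push_cast
  simp [← Complex.ofReal_pow, ← Complex.ofReal_mul, ← Complex.ofReal_neg, Complex.exp_ofReal_re]

lemma integral_gauss_aux {d : ℕ} {b : ℝ} (hb : 0 < b) :
    ∫ x : EuclideanSpace ℝ (Fin d), rexp (-b * ‖x‖ ^ 2) = (π / b) ^ ((d : ℝ) / 2) := by
  rw [GaussianFourier.integral_rexp_neg_mul_sq_norm hb]
  norm_num [finrank_euclideanSpace_fin]

/-- 1D comparison lemma: if `g'' ≥ m` everywhere and `g' 0 = 0`, then `g 1 ≥ g 0 + m/2`. -/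
lemma aux_quad (g g' g'' : ℝ → ℝ) (m : ℝ)
    (hg' : ∀ t, HasDerivAt g (g' t) t)
    (hg'' : ∀ t, HasDerivAt g' (g'' t) t)
    (h0 : g' 0 = 0) (hm : ∀ t, m ≤ g'' t) :
    g 0 + m / 2 ≤ g 1 := by
  set φ : ℝ → ℝ := fun t => g' t - m * t with hφdef
  have hφ : ∀ t, HasDerivAt φ (g'' t - m) t := by
    intro t
    have h2 : HasDerivAt (fun t : ℝ => m * t) (m * 1) t := (hasDerivAt_id t).const_mul m
    have h := (hg'' t).sub h2; rw [mul_one] at h; exact h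
  have hφmono : Monotone φ := by
    apply monotone_of_deriv_nonneg (fun t => (hφ t).differentiableAt)
    intro t
    rw [(hφ t).deriv]
    linarith [hm t]
  have hφnonneg : ∀ t ∈ Set.Icc (0:ℝ) 1, 0 ≤ φ t := by
    intro t ht
    have : φ 0 ≤ φ t := hφmono ht.1
    simpa [hφdef, h0] using this
  set u : ℝ → ℝ := fun t => g t - m / 2 * t ^ 2 with hudef
  have hu : ∀ t, HasDerivAt u (φ t) t := by
    intro t
    have h2 : HasDerivAt (fun t : ℝ => m / 2 * t ^ 2) (m / 2 * (↑2 * t ^ 1)) t :=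
      (hasDerivAt_pow 2 t).const_mul (m / 2)
    have := (hg' t).fun_sub h2
    exact this.congr_deriv (by simp [hφdef]; ring)
  have humono : MonotoneOn u (Set.Icc (0:ℝ) 1) := by
    apply monotoneOn_of_deriv_nonneg (convex_Icc 0 1)
    · exact fun t _ => ((hu t).differentiableAt.continuousAt).continuousWithinAt
    · intro t ht
      exact ((hu t).differentiableAt).differentiableWithinAt
    · intro t ht
      rw [(hu t).deriv]
      exact hφnonneg t (interior_subset ht)
  have := humono (Set.mem_Icc.2 ⟨le_refl 0, zero_le_one⟩) (Set.mem_Icc.2 ⟨zero_le_one, le_refl 1⟩)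
    zero_le_one
  simp only [hudef] at this
  nlinarith [this]

/-- Strong convexity / smoothness bounds from the Hessian bounds. -/
lemma strong_bounds {d : ℕ} (L : ℝ) (f : EuclideanSpace ℝ (Fin d) → ℝ)
    (hf : ContDiff ℝ 2 f)
    (hconv : ∀ x v : EuclideanSpace ℝ (Fin d),
      ‖v‖ ^ 2 ≤ (inner ℝ (fderiv ℝ (gradient f) x v) v : ℝ))
    (hsmooth : ∀ x v : EuclideanSpace ℝ (Fin d),
      (inner ℝ (fderiv ℝ (gradient f) x v) v : ℝ) ≤ L * ‖v‖ ^ 2)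
    (hmin : gradient f 0 = 0) (x : EuclideanSpace ℝ (Fin d)) :
    f 0 + ‖x‖ ^ 2 / 2 ≤ f x ∧ f x ≤ f 0 + L * ‖x‖ ^ 2 / 2 := by
  have hfd : Differentiable ℝ f := hf.differentiable (by norm_num)
  have hgd : Differentiable ℝ (gradient f) := by
    have h1 : ContDiff ℝ 1 (fderiv ℝ f) := hf.fderiv_right (by norm_num)
    have heq : gradient f = fun y => (InnerProductSpace.toDual ℝ _).symm (fderiv ℝ f y) := rfl
    rw [heq]
    exact fun y => ((InnerProductSpace.toDual ℝ _).symm.toContinuousLinearEquiv.differentiable.comp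
      (h1.differentiable one_ne_zero)).differentiableAt
  have hline : ∀ t : ℝ, HasDerivAt (fun s : ℝ => s • x) x t := fun t => by
    simpa using (hasDerivAt_id t).smul_const x
  have hinner : ∀ y, (fderiv ℝ f y) x = (inner ℝ x (gradient f y) : ℝ) := fun y => by
    rw [real_inner_comm]
    exact (InnerProductSpace.toDual_symm_apply).symm
  set g' : ℝ → ℝ := fun t => (innerSL ℝ x) (gradient f (t • x)) with hg'def
  have hg' : ∀ t, HasDerivAt (fun t : ℝ => f (t • x)) (g' t) t := by
    intro t
    have h1 : HasDerivAt (fun t : ℝ => f (t • x)) ((fderiv ℝ f (t • x)) x) t :=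
      (hfd _).hasFDerivAt.comp_hasDerivAt t (hline t)
    convert h1 using 1
    rw [hinner (t • x)]
    rfl
  set g'' : ℝ → ℝ := fun t => (innerSL ℝ x) ((fderiv ℝ (gradient f) (t • x)) x) with hg''def
  have hg'' : ∀ t, HasDerivAt g' (g'' t) t := by
    intro t
    have h1 : HasDerivAt (fun t : ℝ => gradient f (t • x)) ((fderiv ℝ (gradient f) (t • x)) x) t :=
      (hgd _).hasFDerivAt.comp_hasDerivAt t (hline t)
    exact (innerSL ℝ x).hasFDerivAt.comp_hasDerivAt t h1
  have h0 : g' 0 = 0 := by simp only [hg'def, zero_smul, hmin, map_zero]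
  have hlowbd : ∀ t, ‖x‖ ^ 2 ≤ g'' t := by
    intro t
    show ‖x‖ ^ 2 ≤ (innerSL ℝ x) ((fderiv ℝ (gradient f) (t • x)) x)
    rw [innerSL_apply_apply, real_inner_comm]
    exact hconv (t • x) x
  have hupbd : ∀ t, g'' t ≤ L * ‖x‖ ^ 2 := by
    intro t
    show (innerSL ℝ x) ((fderiv ℝ (gradient f) (t • x)) x) ≤ L * ‖x‖ ^ 2
    rw [innerSL_apply_apply, real_inner_comm]
    exact hsmooth (t • x) x
  constructor
  · have := aux_quad (fun t => f (t • x)) g' g'' (‖x‖ ^ 2) hg' hg'' h0 hlowbd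
    simpa using this
  · have hg'2 : ∀ t : ℝ, HasDerivAt (fun t : ℝ => L * ‖x‖ ^ 2 / 2 * t ^ 2 - f (t • x))
        (L * ‖x‖ ^ 2 * t - g' t) t := by
      intro t
      have h2 : HasDerivAt (fun t : ℝ => L * ‖x‖ ^ 2 / 2 * t ^ 2)
          (L * ‖x‖ ^ 2 / 2 * (↑2 * t ^ 1)) t := (hasDerivAt_pow 2 t).const_mul _
      have := h2.fun_sub (hg' t)
      exact this.congr_deriv (by ring)
    have hg''2 : ∀ t : ℝ, HasDerivAt (fun t : ℝ => L * ‖x‖ ^ 2 * t - g' t)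
        (L * ‖x‖ ^ 2 - g'' t) t := by
      intro t
      have h2 : HasDerivAt (fun t : ℝ => L * ‖x‖ ^ 2 * t) (L * ‖x‖ ^ 2 * 1) t :=
        (hasDerivAt_id t).const_mul _
      have h := h2.sub (hg'' t); rw [mul_one] at h; exact h
    have := aux_quad (fun t => L * ‖x‖ ^ 2 / 2 * t ^ 2 - f (t • x))
      (fun t => L * ‖x‖ ^ 2 * t - g' t) (fun t => L * ‖x‖ ^ 2 - g'' t) 0
      hg'2 hg''2 (by simp [h0]) (fun t => by show (0:ℝ) ≤ L * ‖x‖ ^ 2 - g'' t; linarith [hupbd t])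
    simp only [zero_smul, one_smul, zero_pow, one_pow] at this
    nlinarith [this]

/-- If `R = e^{-f}` is a probability density with `f` 1-strongly convex, `L`-smooth,
with global minimum at `0`, and `Q₀ = N(0, I_d)`, then for all `α ≥ 1`,
`D_α(R ‖ Q₀) ≤ d ln L`. -/
theorem renyiDiv_target_init_le {d : ℕ} (L : ℝ) (f : EuclideanSpace ℝ (Fin d) → ℝ)
    (hf : ContDiff ℝ 2 f)
    (hconv : ∀ x v : EuclideanSpace ℝ (Fin d),
      ‖v‖ ^ 2 ≤ (inner ℝ (fderiv ℝ (gradient f) x v) v : ℝ))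
    (hsmooth : ∀ x v : EuclideanSpace ℝ (Fin d),
      (inner ℝ (fderiv ℝ (gradient f) x v) v : ℝ) ≤ L * ‖v‖ ^ 2)
    (hmin : gradient f 0 = 0)
    (hprob : ∫ x, Real.exp (-f x) = 1)
    (α : ℝ) (hα : 1 ≤ α) :
    renyiDiv α (fun x => Real.exp (-f x))
        (gaussDensity 1 (0 : EuclideanSpace ℝ (Fin d))) ≤ (d : ℝ) * Real.log L := by
  rcases Nat.eq_zero_or_pos d with hd | hd
  · -- degenerate case `d = 0`
    subst hd
    have hnorm : ∀ x : EuclideanSpace ℝ (Fin 0), ‖x‖ = 0 := fun x => by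
      rw [Subsingleton.elim x 0, norm_zero]
    have hone : ∫ x : EuclideanSpace ℝ (Fin 0), (1 : ℝ) = 1 := by
      have h := integral_gauss_aux (d := 0) (b := 1) one_pos
      simpa [hnorm] using h
    have hμ : ((volume : Measure (EuclideanSpace ℝ (Fin 0))) Set.univ).toReal = 1 := by
      have h := hone; simp [integral_const] at h; exact h
    have hf0 : f 0 = 0 := by
      have hc : (fun x : EuclideanSpace ℝ (Fin 0) => rexp (-f x)) = fun _ => rexp (-f 0) :=
        funext fun x => by rw [Subsingleton.elim x 0]
      rw [hc, integral_const, measureReal_def, hμ, one_smul] at hprob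
      have h := congrArg Real.log hprob
      rw [Real.log_exp, Real.log_one] at h
      linarith
    have hint1 : ∫ x : EuclideanSpace ℝ (Fin 0),
        rexp (-f x) ^ α * gaussDensity 1 (0 : EuclideanSpace ℝ (Fin 0)) x ^ (1 - α) = 1 := by
      have hc : (fun x : EuclideanSpace ℝ (Fin 0) =>
          rexp (-f x) ^ α * gaussDensity 1 (0 : EuclideanSpace ℝ (Fin 0)) x ^ (1 - α)) =
          fun _ => (1 : ℝ) := by
        funext x
        rw [Subsingleton.elim x 0]
        simp [gaussDensity, hf0, hnorm, Real.one_rpow, Real.rpow_natCast]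
      rw [hc, hone]
    rw [renyiDiv, hint1]
    simp
  · -- main case `d ≥ 1`
    have hL1 : 1 ≤ L := by
      set v : EuclideanSpace ℝ (Fin d) := EuclideanSpace.single ⟨0, hd⟩ 1 with hv
      have hvnorm : ‖v‖ = 1 := by simp [hv, EuclideanSpace.norm_single]
      have h := le_trans (hconv 0 v) (hsmooth 0 v)
      rw [hvnorm] at h
      simpa using h
    have hL0 : (0 : ℝ) < L := lt_of_lt_of_le one_pos hL1
    have hbounds := strong_bounds L f hf hconv hsmooth hmin
    set F0 := f 0 with hF0def
    -- integrability of the density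
    have hintR : Integrable (fun x : EuclideanSpace ℝ (Fin d) => rexp (-f x)) := by
      have hdom : Integrable (fun x : EuclideanSpace ℝ (Fin d) =>
          rexp (-F0) * rexp (-(1/2 : ℝ) * ‖x‖ ^ 2)) :=
        (integrable_gauss_aux (by norm_num : (0:ℝ) < 1/2)).const_mul _
      refine hdom.mono ?_ (Filter.Eventually.of_forall fun x => ?_)
      · exact (Continuous.rexp hf.continuous.neg).aestronglyMeasurable
      · have h1 := (hbounds x).1
        rw [Real.norm_eq_abs, Real.norm_eq_abs, abs_of_pos (Real.exp_pos _),
          abs_of_pos (by positivity), ← Real.exp_add]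
        apply Real.exp_le_exp.2
        linarith
    -- normalization lower bound
    have hlow : rexp (-F0) * (2 * π / L) ^ ((d : ℝ) / 2) ≤ 1 := by
      have h1 : ∀ x : EuclideanSpace ℝ (Fin d),
          rexp (-F0) * rexp (-(L/2) * ‖x‖ ^ 2) ≤ rexp (-f x) := fun x => by
        rw [← Real.exp_add]
        exact Real.exp_le_exp.2 (by have := (hbounds x).2; linarith)
      have h2 := integral_mono
        ((integrable_gauss_aux (half_pos hL0)).const_mul (rexp (-F0))) hintR h1
      rw [integral_const_mul, integral_gauss_aux (half_pos hL0), hprob] at h2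
      have hpi : π / (L/2) = 2 * π / L := by field_simp
      rwa [hpi] at h2
    have hF0 : rexp (-F0) ≤ (L / (2 * π)) ^ ((d : ℝ) / 2) := by
      have hpos : (0:ℝ) < (2 * π / L) ^ ((d : ℝ) / 2) :=
        Real.rpow_pos_of_pos (div_pos (by positivity) hL0) _
      have h1 : rexp (-F0) ≤ 1 / (2 * π / L) ^ ((d : ℝ) / 2) :=
        (le_div_iff₀ hpos).2 hlow
      have h2 : (L / (2 * π)) ^ ((d : ℝ) / 2) = 1 / (2 * π / L) ^ ((d : ℝ) / 2) := by
        rw [one_div, ← Real.inv_rpow (div_pos (by positivity) hL0).le]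
        congr 1
        rw [inv_div]
      rw [h2]
      exact h1
    -- pointwise density ratio bound
    set Q : EuclideanSpace ℝ (Fin d) → ℝ := gaussDensity 1 (0 : EuclideanSpace ℝ (Fin d))
      with hQdef
    have hQpos : ∀ x, 0 < Q x := fun x => by
      rw [hQdef]
      unfold gaussDensity
      positivity
    have hRQ : ∀ x, rexp (-f x) ≤ L ^ ((d : ℝ) / 2) * Q x := by
      intro x
      have h1 : rexp (-f x) ≤ rexp (-F0) * rexp (-‖x‖ ^ 2 / 2) := by
        rw [← Real.exp_add]
        exact Real.exp_le_exp.2 (by have := (hbounds x).1; linarith)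
      have h2 : Q x = (2 * π) ^ (-(d : ℝ) / 2) * rexp (-‖x‖ ^ 2 / 2) := by
        rw [hQdef]
        unfold gaussDensity
        rw [sub_zero]
        norm_num
      have h3 : (L / (2 * π)) ^ ((d : ℝ) / 2) = L ^ ((d : ℝ) / 2) * (2 * π) ^ (-(d : ℝ) / 2) := by
        rw [neg_div, Real.rpow_neg (by positivity), ← div_eq_mul_inv,
          Real.div_rpow hL0.le (by positivity)]
      calc rexp (-f x) ≤ rexp (-F0) * rexp (-‖x‖ ^ 2 / 2) := h1
        _ ≤ (L / (2 * π)) ^ ((d : ℝ) / 2) * rexp (-‖x‖ ^ 2 / 2) :=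
            mul_le_mul_of_nonneg_right hF0 (Real.exp_pos _).le
        _ = L ^ ((d : ℝ) / 2) * Q x := by rw [h3, h2]; ring
    -- pointwise integrand bound
    have hα0 : 0 ≤ α - 1 := by linarith
    have hkey : ∀ x, rexp (-f x) ^ α * Q x ^ (1 - α) ≤
        L ^ ((d : ℝ) * (α - 1) / 2) * rexp (-f x) := by
      intro x
      have hRpos : (0:ℝ) < rexp (-f x) := Real.exp_pos _
      have hQp := hQpos x
      have e1 : rexp (-f x) ^ α * Q x ^ (1 - α) =
          (rexp (-f x) / Q x) ^ (α - 1) * rexp (-f x) := by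
        rw [Real.div_rpow hRpos.le hQp.le, div_mul_eq_mul_div, div_eq_mul_inv,
          ← Real.rpow_neg hQp.le, neg_sub, ← Real.rpow_add_one (ne_of_gt hRpos)]
        ring_nf
      rw [e1]
      have h4 : (rexp (-f x) / Q x) ^ (α - 1) ≤ (L ^ ((d : ℝ) / 2)) ^ (α - 1) := by
        apply Real.rpow_le_rpow (div_nonneg (Real.exp_pos _).le (hQpos x).le) _ hα0
        rw [div_le_iff₀ hQp]
        exact hRQ x
      have h5 : (L ^ ((d : ℝ) / 2)) ^ (α - 1) = L ^ ((d : ℝ) * (α - 1) / 2) := by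
        rw [← Real.rpow_mul hL0.le]
        ring_nf
      rw [h5] at h4
      exact mul_le_mul_of_nonneg_right h4 hRpos.le
    -- integral bound
    have hint2 : ∫ x, rexp (-f x) ^ α * Q x ^ (1 - α) ≤ L ^ ((d : ℝ) * (α - 1) / 2) := by
      have h := integral_mono_of_nonneg
        (Filter.Eventually.of_forall fun x => mul_nonneg
          (Real.rpow_nonneg (Real.exp_pos _).le _) (Real.rpow_nonneg (hQpos x).le _))
        (hintR.const_mul (L ^ ((d : ℝ) * (α - 1) / 2)))
        (Filter.Eventually.of_forall hkey)
      rwa [integral_const_mul, hprob, mul_one] at h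
    have hintnonneg : (0:ℝ) ≤ ∫ x, rexp (-f x) ^ α * Q x ^ (1 - α) :=
      integral_nonneg fun x => mul_nonneg
        (Real.rpow_nonneg (Real.exp_pos _).le _) (Real.rpow_nonneg (hQpos x).le _)
    have hM1 : (1:ℝ) ≤ L ^ ((d : ℝ) * (α - 1) / 2) :=
      Real.one_le_rpow hL1 (div_nonneg (mul_nonneg (Nat.cast_nonneg d) (by linarith)) (by norm_num))
    have hlog : Real.log (∫ x, rexp (-f x) ^ α * Q x ^ (1 - α)) ≤
        ((d : ℝ) * (α - 1) / 2) * Real.log L := by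
      have h2 : Real.log (∫ x, rexp (-f x) ^ α * Q x ^ (1 - α)) ≤
          Real.log (L ^ ((d : ℝ) * (α - 1) / 2)) := by
        rcases eq_or_lt_of_le hintnonneg with h | h
        · rw [← h, Real.log_zero]
          exact Real.log_nonneg hM1
        · exact Real.log_le_log h hint2
      rwa [Real.log_rpow hL0] at h2
    have hc : (0:ℝ) ≤ (α - 1)⁻¹ := inv_nonneg.2 hα0
    have hlogL : (0:ℝ) ≤ Real.log L := Real.log_nonneg hL1
    rw [renyiDiv]
    calc (α - 1)⁻¹ * Real.log (∫ x, rexp (-f x) ^ α * Q x ^ (1 - α))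
        ≤ (α - 1)⁻¹ * (((d : ℝ) * (α - 1) / 2) * Real.log L) :=
          mul_le_mul_of_nonneg_left hlog hc
      _ ≤ (d : ℝ) * Real.log L := by
          rcases eq_or_lt_of_le hα with h | h
          · rw [← h]
            simp
            positivity
          · have hne : α - 1 ≠ 0 := by linarith
            rw [show (α - 1)⁻¹ * (((d : ℝ) * (α - 1) / 2) * Real.log L) =
              ((α - 1)⁻¹ * (α - 1)) * ((d : ℝ) / 2 * Real.log L) by ring,
              inv_mul_cancel₀ hne, one_mul]
            nlinarith [Nat.cast_nonneg (α := ℝ) d]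
end

section
/- Let R(x) = e^{−f(x)} be a probability density on ℝ^d with f 1-strongly convex, L-smooth, and global minimum at 0, and let Q₀ = N(0, I_d). Then D_{1+1/L}(Q₀ ‖ R) ≤ (dL ln L)/2. -/
open MeasureTheory Real

/-- Second-order bound helper on ℝ. -/
lemma taylor_aux {φ ψ χ : ℝ → ℝ} {c : ℝ}
    (hφ : ∀ t, HasDerivAt φ (ψ t) t) (hψ : ∀ t, HasDerivAt ψ (χ t) t)
    (hχ : ∀ t, χ t ≤ c) (hψ0 : ψ 0 = 0) : φ 1 ≤ φ 0 + c / 2 := by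
  have hw : ∀ t ∈ Set.Icc (0:ℝ) 1, ψ t ≤ c * t := by
    intro t ht
    have hmono : MonotoneOn (fun t => c * t - ψ t) (Set.Icc (0:ℝ) 1) := by
      apply monotoneOn_of_deriv_nonneg (convex_Icc 0 1)
      · exact (Continuous.sub (continuous_const.mul continuous_id)
          (Differentiable.continuous fun t => (hψ t).differentiableAt)).continuousOn
      · intro t _
        exact ((hasDerivAt_id t).const_mul c |>.sub (hψ t)).differentiableAt.differentiableWithinAt
      · intro t _
        have : deriv (fun t => c * t - ψ t) t = c * 1 - χ t :=
          ((hasDerivAt_id t).const_mul c |>.sub (hψ t)).deriv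
        rw [this]
        simpa using hχ t
    have h0 := hmono (Set.left_mem_Icc.2 zero_le_one) ht ht.1
    simp only [mul_zero, hψ0, sub_zero] at h0
    linarith
  have hmono : MonotoneOn (fun t => φ 0 + c * t ^ 2 / 2 - φ t) (Set.Icc (0:ℝ) 1) := by
    apply monotoneOn_of_deriv_nonneg (convex_Icc 0 1)
    · exact (Continuous.sub (by continuity)
        (Differentiable.continuous fun t => (hφ t).differentiableAt)).continuousOn
    · intro t _
      have h : HasDerivAt (fun t => φ 0 + c * t ^ 2 / 2 - φ t) (c * t - ψ t) t := by
        have h1 : HasDerivAt (fun t : ℝ => φ 0 + c * t ^ 2 / 2) (c * t) t := by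
          have := ((hasDerivAt_pow 2 t).const_mul c).div_const 2 |>.const_add (φ 0)
          exact this.congr_deriv (by rw [show (2:ℕ) - 1 = 1 from rfl]; ring)
        exact h1.sub (hφ t)
      exact h.differentiableAt.differentiableWithinAt
    · intro t ht
      rw [interior_Icc] at ht
      have h : HasDerivAt (fun t => φ 0 + c * t ^ 2 / 2 - φ t) (c * t - ψ t) t := by
        have h1 : HasDerivAt (fun t : ℝ => φ 0 + c * t ^ 2 / 2) (c * t) t := by
          have := ((hasDerivAt_pow 2 t).const_mul c).div_const 2 |>.const_add (φ 0)
          exact this.congr_deriv (by rw [show (2:ℕ) - 1 = 1 from rfl]; ring)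
        exact h1.sub (hφ t)
      rw [h.deriv]
      have := hw t ⟨ht.1.le, ht.2.le⟩
      linarith
  have := hmono (Set.left_mem_Icc.2 zero_le_one) (Set.right_mem_Icc.2 zero_le_one) zero_le_one
  simp only at this
  nlinarith [this]

lemma second_deriv_line {d : ℕ} {f : EuclideanSpace ℝ (Fin d) → ℝ} (hf : ContDiff ℝ 2 f)
    (x : EuclideanSpace ℝ (Fin d)) :
    (∀ t : ℝ, HasDerivAt (fun t => f (t • x))
        ((inner ℝ (gradient f (t • x)) x : ℝ)) t) ∧
    (∀ t : ℝ, HasDerivAt (fun t => (inner ℝ (gradient f (t • x)) x : ℝ))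
        ((inner ℝ (fderiv ℝ (gradient f) (t • x) x) x : ℝ)) t) := by
  have hline : ∀ t : ℝ, HasDerivAt (fun t : ℝ => t • x) x t := by
    intro t
    simpa using (hasDerivAt_id t).smul_const x
  have hfd : Differentiable ℝ f := hf.differentiable (by norm_num)
  have hgrad_diff : Differentiable ℝ (gradient f) := by
    have h1 : ContDiff ℝ 1 (fderiv ℝ f) := hf.fderiv_right (le_refl _)
    have h2 : gradient f = fun y => (InnerProductSpace.toDual ℝ _).symm (fderiv ℝ f y) := rfl
    rw [h2]
    exact ((InnerProductSpace.toDual ℝ _).symm.toContinuousLinearEquiv.differentiable.comp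
      (h1.differentiable one_ne_zero))
  constructor
  · intro t
    have h := ((hfd (t • x)).hasFDerivAt.comp_hasDerivAt t (hline t))
    exact h.congr_deriv (by rw [gradient, InnerProductSpace.toDual_symm_apply])
  · intro t
    have hg : HasDerivAt (fun t : ℝ => gradient f (t • x))
        (fderiv ℝ (gradient f) (t • x) x) t :=
      by have := (hgrad_diff (t • x)).hasFDerivAt.comp_hasDerivAt t (hline t); exact this
    have := hg.inner ℝ (hasDerivAt_const t x)
    simpa using this

lemma taylor_bounds {d : ℕ} {L : ℝ} {f : EuclideanSpace ℝ (Fin d) → ℝ}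
    (hf : ContDiff ℝ 2 f)
    (hconv : ∀ x v : EuclideanSpace ℝ (Fin d),
      ‖v‖ ^ 2 ≤ (inner ℝ (fderiv ℝ (gradient f) x v) v : ℝ))
    (hsmooth : ∀ x v : EuclideanSpace ℝ (Fin d),
      (inner ℝ (fderiv ℝ (gradient f) x v) v : ℝ) ≤ L * ‖v‖ ^ 2)
    (hmin : gradient f 0 = 0) (x : EuclideanSpace ℝ (Fin d)) :
    f 0 + ‖x‖ ^ 2 / 2 ≤ f x ∧ f x ≤ f 0 + L * ‖x‖ ^ 2 / 2 := by
  obtain ⟨hφ, hψ⟩ := second_deriv_line hf x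
  have hψ0 : (inner ℝ (gradient f ((0:ℝ) • x)) x : ℝ) = 0 := by
    rw [zero_smul, hmin]; simp
  constructor
  · have := taylor_aux (φ := fun t => -f (t • x))
      (ψ := fun t => -(inner ℝ (gradient f (t • x)) x : ℝ))
      (χ := fun t => -(inner ℝ (fderiv ℝ (gradient f) (t • x) x) x : ℝ))
      (c := -‖x‖ ^ 2)
      (fun t => (hφ t).neg) (fun t => (hψ t).neg)
      (fun t => neg_le_neg (hconv _ _)) (by show -(inner ℝ (gradient f ((0:ℝ) • x)) x : ℝ) = 0; rw [hψ0, neg_zero])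
    simp only [one_smul, zero_smul] at this
    linarith
  · have := taylor_aux (φ := fun t => f (t • x))
      (ψ := fun t => (inner ℝ (gradient f (t • x)) x : ℝ))
      (χ := fun t => (inner ℝ (fderiv ℝ (gradient f) (t • x) x) x : ℝ))
      (c := L * ‖x‖ ^ 2)
      hφ hψ (fun t => hsmooth _ _) hψ0
    simp only [one_smul, zero_smul] at this
    linarith

lemma gauss_integrable {d : ℕ} {b : ℝ} (hb : 0 < b) :
    Integrable (fun x : EuclideanSpace ℝ (Fin d) => Real.exp (-b * ‖x‖ ^ 2)) := by
  have h := (GaussianFourier.integrable_cexp_neg_mul_sq_norm_add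
    (b := (b : ℂ)) (by simpa using hb) 0 (0 : EuclideanSpace ℝ (Fin d))).re
  convert h using 2 with x
  simp [Complex.exp_ofReal_re, ← Complex.ofReal_pow, ← Complex.ofReal_neg,
    ← Complex.ofReal_mul, Complex.exp_ofReal_re]

lemma gauss_integral {d : ℕ} {b : ℝ} (hb : 0 < b) :
    ∫ x : EuclideanSpace ℝ (Fin d), Real.exp (-b * ‖x‖ ^ 2) = (π / b) ^ ((d : ℝ) / 2) := by
  rw [GaussianFourier.integral_rexp_neg_mul_sq_norm hb]
  norm_num [finrank_euclideanSpace_fin]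

/-- If `R = e^{-f}` is a probability density with `f` 1-strongly convex, `L`-smooth,
with global minimum at `0`, and `Q₀ = N(0, I_d)`, then
`D_{1+1/L}(Q₀ ‖ R) ≤ dL ln L / 2`. -/
theorem renyiDiv_init_target_le {d : ℕ} (L : ℝ) (f : EuclideanSpace ℝ (Fin d) → ℝ)
    (hf : ContDiff ℝ 2 f)
    (hconv : ∀ x v : EuclideanSpace ℝ (Fin d),
      ‖v‖ ^ 2 ≤ (inner ℝ (fderiv ℝ (gradient f) x v) v : ℝ))
    (hsmooth : ∀ x v : EuclideanSpace ℝ (Fin d),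
      (inner ℝ (fderiv ℝ (gradient f) x v) v : ℝ) ≤ L * ‖v‖ ^ 2)
    (hmin : gradient f 0 = 0)
    (hprob : ∫ x, Real.exp (-f x) = 1) :
    renyiDiv (1 + 1 / L) (gaussDensity 1 (0 : EuclideanSpace ℝ (Fin d)))
        (fun x => Real.exp (-f x)) ≤ (d : ℝ) * L * Real.log L / 2 := by
  rcases Nat.eq_zero_or_pos d with hd0 | hd0
  · subst hd0
    have hZ : renyiDiv (1 + 1/L) (gaussDensity 1 (0 : EuclideanSpace ℝ (Fin 0)))
        (fun x => Real.exp (-f x)) = 0 := by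
      have hd : (volume : Measure (EuclideanSpace ℝ (Fin 0))) = Measure.dirac 0 :=
        volume_euclideanSpace_eq_dirac (Fin 0)
      rw [hd, integral_dirac] at hprob
      unfold renyiDiv gaussDensity
      rw [hd, integral_dirac]
      simp [hprob]
    rw [hZ]
    simp
  -- main case `1 ≤ d`
  have hL1 : (1:ℝ) ≤ L := by
    have h1 := hconv 0 (EuclideanSpace.single (⟨0, hd0⟩ : Fin d) (1:ℝ))
    have h2 := hsmooth 0 (EuclideanSpace.single (⟨0, hd0⟩ : Fin d) (1:ℝ))
    rw [EuclideanSpace.norm_single] at h1 h2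
    norm_num at h1 h2
    linarith
  have hL0 : (0:ℝ) < L := by linarith
  have h2π : (0:ℝ) < 2 * π := by positivity
  set α : ℝ := 1 + 1 / L with hα
  have hα1 : α - 1 = 1 / L := by rw [hα]; ring
  set A : ℝ := (2 * π) ^ (-(d:ℝ)/2) with hA
  have hApos : 0 < A := Real.rpow_pos_of_pos h2π _
  have htay := taylor_bounds hf hconv hsmooth hmin
  -- bound on f 0
  have hf0 : f 0 ≤ (d:ℝ)/2 * Real.log (2*π) := by
    have hle : ∀ x : EuclideanSpace ℝ (Fin d),
        Real.exp (-f x) ≤ Real.exp (-f 0) * Real.exp (-(1/2) * ‖x‖^2) := by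
      intro x
      rw [← Real.exp_add]
      apply Real.exp_le_exp.2
      have := (htay x).1
      linarith
    have hint : (1:ℝ) ≤ Real.exp (-f 0) * (2*π) ^ ((d:ℝ)/2) := by
      calc (1:ℝ) = ∫ x, Real.exp (-f x) := hprob.symm
        _ ≤ ∫ x : EuclideanSpace ℝ (Fin d),
              Real.exp (-f 0) * Real.exp (-(1/2) * ‖x‖^2) := by
            apply integral_mono_of_nonneg
            · exact Filter.Eventually.of_forall fun x => (Real.exp_pos _).le
            · exact (gauss_integrable (by norm_num)).const_mul _
            · exact Filter.Eventually.of_forall hle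
        _ = Real.exp (-f 0) * (π / (1/2)) ^ ((d:ℝ)/2) := by
            rw [integral_const_mul, gauss_integral (by norm_num)]
        _ = Real.exp (-f 0) * (2*π) ^ ((d:ℝ)/2) := by
            congr 2
            field_simp
    have hlog := Real.log_le_log one_pos hint
    rw [Real.log_one, Real.log_mul (Real.exp_ne_zero _)
      (ne_of_gt (Real.rpow_pos_of_pos h2π _)), Real.log_exp,
      Real.log_rpow h2π] at hlog
    linarith
  -- the integrand and its bound
  set g : EuclideanSpace ℝ (Fin d) → ℝ :=
    fun x => gaussDensity 1 0 x ^ α * Real.exp (-f x) ^ (1 - α) with hg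
  have hgd : ∀ x : EuclideanSpace ℝ (Fin d),
      gaussDensity 1 0 x = A * Real.exp (-(1/2) * ‖x‖^2) := by
    intro x
    unfold gaussDensity
    rw [mul_one, sub_zero]
    congr 1
    ring_nf
  have hgeq : ∀ x, g x = A ^ α * Real.exp ((-(1/2) * ‖x‖^2) * α)
      * Real.exp ((-f x) * (1 - α)) := by
    intro x
    rw [hg]
    simp only
    rw [hgd x, Real.mul_rpow hApos.le (Real.exp_pos _).le, ← Real.exp_mul, ← Real.exp_mul]
  set C : ℝ := A ^ α * Real.exp (f 0 / L) with hC
  have hCpos : 0 < C := mul_pos (Real.rpow_pos_of_pos hApos _) (Real.exp_pos _)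
  have hgle : ∀ x, g x ≤ C * Real.exp (-(1/(2*L)) * ‖x‖^2) := by
    intro x
    have hfx := (htay x).2
    have h1 : (-f x) * (1 - α) = f x / L := by
      rw [hα]; field_simp; try ring
    have h2 : f x / L ≤ f 0 / L + ‖x‖^2 / 2 := by
      rw [div_le_iff₀ hL0]
      have he : (f 0 / L + ‖x‖^2/2) * L = f 0 + L * ‖x‖^2 / 2 := by
        field_simp
      rw [he]
      exact hfx
    have h3 : (-(1/2) * ‖x‖^2) * α + ‖x‖^2 / 2 = -(1/(2*L)) * ‖x‖^2 := by
      rw [hα]; field_simp; ring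
    have harg : (-(1/2) * ‖x‖^2) * α + (-f x) * (1 - α)
        ≤ f 0 / L + -(1/(2*L)) * ‖x‖^2 := by
      rw [h1]; linarith
    calc g x = A ^ α * Real.exp ((-(1/2) * ‖x‖^2) * α + (-f x) * (1 - α)) := by
          rw [hgeq x, mul_assoc (A ^ α), ← Real.exp_add]
      _ ≤ A ^ α * Real.exp (f 0 / L + -(1/(2*L)) * ‖x‖^2) :=
          mul_le_mul_of_nonneg_left (Real.exp_le_exp.2 harg)
            (Real.rpow_pos_of_pos hApos _).le
      _ = C * Real.exp (-(1/(2*L)) * ‖x‖^2) := by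
          rw [hC, Real.exp_add, mul_assoc]
  have hgpos : ∀ x, 0 < g x := by
    intro x
    exact mul_pos (Real.rpow_pos_of_pos (by rw [hgd x]; positivity) _)
      (Real.rpow_pos_of_pos (Real.exp_pos _) _)
  have hbound_int : Integrable
      (fun x : EuclideanSpace ℝ (Fin d) => C * Real.exp (-(1/(2*L)) * ‖x‖^2)) :=
    (gauss_integrable (by positivity)).const_mul _
  have hgcont : Continuous g := by
    apply Continuous.mul
    · apply Continuous.rpow_const
      · unfold gaussDensity
        fun_prop
      · intro x
        left
        rw [hgd x]
        positivity
    · apply Continuous.rpow_const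
      · exact (hf.continuous.neg).rexp
      · intro x
        left
        exact Real.exp_ne_zero _
  have hgint : Integrable g := by
    apply hbound_int.mono' hgcont.aestronglyMeasurable
    apply Filter.Eventually.of_forall
    intro x
    rw [Real.norm_of_nonneg (hgpos x).le]
    exact hgle x
  have hIpos : 0 < ∫ x, g x := by
    rw [integral_pos_iff_support_of_nonneg (fun x => (hgpos x).le) hgint]
    have : Function.support g = Set.univ :=
      Set.eq_univ_of_forall fun x => Function.mem_support.2 (hgpos x).ne'
    rw [this]
    exact isOpen_univ.measure_pos volume ⟨0, trivial⟩
  have hIle : ∫ x, g x ≤ C * (2 * π * L) ^ ((d:ℝ)/2) := by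
    calc ∫ x, g x ≤ ∫ x : EuclideanSpace ℝ (Fin d),
          C * Real.exp (-(1/(2*L)) * ‖x‖^2) :=
        integral_mono hgint hbound_int hgle
      _ = C * (π / (1/(2*L))) ^ ((d:ℝ)/2) := by
          rw [integral_const_mul, gauss_integral (by positivity)]
      _ = C * (2 * π * L) ^ ((d:ℝ)/2) := by
          congr 2
          field_simp
  -- put things together
  have hlogle : Real.log (∫ x, g x) ≤ Real.log (C * (2 * π * L) ^ ((d:ℝ)/2)) :=
    Real.log_le_log hIpos hIle
  have hlogC : Real.log (C * (2 * π * L) ^ ((d:ℝ)/2))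
      = α * (-(d:ℝ)/2 * Real.log (2*π)) + f 0 / L
        + (d:ℝ)/2 * (Real.log (2*π) + Real.log L) := by
    rw [Real.log_mul (ne_of_gt hCpos) (ne_of_gt (Real.rpow_pos_of_pos (by positivity) _)),
      hC, Real.log_mul (ne_of_gt (Real.rpow_pos_of_pos hApos _)) (Real.exp_ne_zero _),
      Real.log_rpow hApos, Real.log_exp,
      Real.log_rpow (show (0:ℝ) < 2*π*L by positivity), hA,
      Real.log_rpow h2π, Real.log_mul (ne_of_gt h2π) (ne_of_gt hL0)]
    try ring
  have hren : renyiDiv α (gaussDensity 1 (0 : EuclideanSpace ℝ (Fin d)))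
      (fun x => Real.exp (-f x)) = L * Real.log (∫ x, g x) := by
    unfold renyiDiv
    rw [hα1]
    congr 1
    rw [one_div, inv_inv]
  rw [hren]
  calc L * Real.log (∫ x, g x)
      ≤ L * Real.log (C * (2 * π * L) ^ ((d:ℝ)/2)) :=
        mul_le_mul_of_nonneg_left hlogle hL0.le
    _ = f 0 - (d:ℝ)/2 * Real.log (2*π) + (d:ℝ) * L * Real.log L / 2 := by
        rw [hlogC, hα]
        field_simp
        ring
    _ ≤ (d:ℝ) * L * Real.log L / 2 := by linarith
end
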